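/- Let ψ be a generating function for an admissible relative entropy, i.e. ψ ∈ C(ℝ⁺₀) ∩ C⁴(ℝ⁺), ψ(1) = ψ'(1) = 0, ψ'' > 0 on ℝ⁺, and (ψ''')² ≤ (1/2) ψ'' ψ''''. Then ψ(y) ≤ 2 ψ''(1) · (y−1)²/2 = ψ''(1)(y−1)² for all y ≥ 0. -/

import Mathlib

open Set Filter Topology

/-- A positive concave function `h` on `(0,∞)` satisfies `h t ≥ min t 1 * h 1`. -/
lemma aux_concave_bound (h : ℝ → ℝ) (hconc : ConcaveOn ℝ (Set.Ioi 0) h)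
    (hp : ∀ t : ℝ, 0 < t → 0 < h t) :
    ∀ t : ℝ, 0 < t → min t 1 * h 1 ≤ h t := by
  intro t ht
  rcases lt_trichotomy t 1 with hlt | heq | hgt
  · -- t < 1 : use points s ∈ (0,t) and 1
    rw [min_eq_left hlt.le]
    have key : ∀ s ∈ Ioo (0:ℝ) t, (t - s) / (1 - s) * h 1 ≤ h t := by
      intro s hs
      obtain ⟨hs0, hst⟩ := hs
      have hs1 : s < 1 := hst.trans hlt
      have hd : (0:ℝ) < 1 - s := by linarith
      have ha : (0:ℝ) ≤ (1 - t) / (1 - s) := by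
        apply div_nonneg <;> linarith
      have hb : (0:ℝ) ≤ (t - s) / (1 - s) := by
        apply div_nonneg <;> linarith
      have hsum : (1 - t) / (1 - s) + (t - s) / (1 - s) = 1 := by
        field_simp
        ring
      have hcomb := hconc.2 (Set.mem_Ioi.mpr hs0) (Set.mem_Ioi.mpr one_pos) ha hb hsum
      simp only [smul_eq_mul] at hcomb
      have hpt : (1 - t) / (1 - s) * s + (t - s) / (1 - s) * (1:ℝ) = t := by
        field_simp
        ring
      rw [hpt] at hcomb
      have hhs : 0 < h s := hp s hs0
      have : (0:ℝ) ≤ (1 - t) / (1 - s) * h s := by positivity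
      linarith
    have htend : Tendsto (fun s : ℝ => (t - s) / (1 - s) * h 1) (𝓝[>] 0) (𝓝 (t * h 1)) := by
      have hc : ContinuousAt (fun s : ℝ => (t - s) / (1 - s) * h 1) 0 := by
        apply ContinuousAt.mul _ continuousAt_const
        exact ((continuousAt_const.sub continuousAt_id).div
          (continuousAt_const.sub continuousAt_id) (by norm_num))
      have h2 : Tendsto (fun s : ℝ => (t - s) / (1 - s) * h 1) (𝓝[>] (0:ℝ))
          (𝓝 ((t - 0) / (1 - 0) * h 1)) := hc.tendsto.mono_left nhdsWithin_le_nhds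
      simpa using h2
    refine le_of_tendsto htend ?_
    filter_upwards [Ioo_mem_nhdsGT_of_mem ⟨le_refl 0, ht⟩] with s hs using key s hs
  · subst heq; simp
  · -- t > 1 : use points 1 and T > t
    rw [min_eq_right hgt.le]
    have key : ∀ T : ℝ, t < T → (T - t) / (T - 1) * h 1 ≤ h t := by
      intro T hT
      have hd : (0:ℝ) < T - 1 := by linarith
      have ha : (0:ℝ) ≤ (T - t) / (T - 1) := by
        apply div_nonneg <;> linarith
      have hb : (0:ℝ) ≤ (t - 1) / (T - 1) := by
        apply div_nonneg <;> linarith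
      have hsum : (T - t) / (T - 1) + (t - 1) / (T - 1) = 1 := by
        field_simp
        ring
      have hcomb := hconc.2 (Set.mem_Ioi.mpr one_pos)
        (Set.mem_Ioi.mpr (by linarith : (0:ℝ) < T)) ha hb hsum
      simp only [smul_eq_mul] at hcomb
      have hpt : (T - t) / (T - 1) * (1:ℝ) + (t - 1) / (T - 1) * T = t := by
        field_simp
        ring
      rw [hpt] at hcomb
      have hhT : 0 < h T := hp T (by linarith)
      have : (0:ℝ) ≤ (t - 1) / (T - 1) * h T := by positivity
      linarith
    have htend : Tendsto (fun T : ℝ => (T - t) / (T - 1) * h 1) atTop (𝓝 (1 * h 1)) := by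
      apply Tendsto.mul _ tendsto_const_nhds
      have h0 : Tendsto (fun T : ℝ => 1 + (1 - t) / (T - 1)) atTop (𝓝 (1 + 0)) := by
        apply tendsto_const_nhds.add
        exact Tendsto.div_atTop tendsto_const_nhds (tendsto_atTop_add_const_right _ _ tendsto_id)
      rw [show (1:ℝ) + 0 = 1 by norm_num] at h0
      apply h0.congr'
      filter_upwards [eventually_gt_atTop (1:ℝ)] with T hT
      have hne : T - 1 ≠ 0 := by linarith
      field_simp
      ring
    refine le_of_tendsto htend ?_
    filter_upwards [eventually_gt_atTop t] with T hT using key T hT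

/-- If ψ is a generating function for an admissible relative entropy
(ψ ∈ C(ℝ⁺₀) ∩ C⁴(ℝ⁺), ψ(1) = ψ'(1) = 0, ψ'' > 0 on ℝ⁺, (ψ''')² ≤ ½ ψ'' ψ''''),
then ψ(y) ≤ ψ''(1) (y−1)² for all y ≥ 0. -/
theorem stmt_5 (ψ : ℝ → ℝ)
    (hcont : ContinuousOn ψ (Set.Ici (0 : ℝ)))
    (hC4 : ContDiffOn ℝ 4 ψ (Set.Ioi (0 : ℝ)))
    (h1 : ψ 1 = 0) (h1' : deriv ψ 1 = 0)
    (hpos : ∀ y : ℝ, 0 < y → 0 < deriv^[2] ψ y)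
    (hadm : ∀ y : ℝ, 0 < y →
      (deriv^[3] ψ y) ^ 2 ≤ (1 / 2) * (deriv^[2] ψ y) * (deriv^[4] ψ y)) :
    ∀ y : ℝ, 0 ≤ y → ψ y ≤ deriv^[2] ψ 1 * (y - 1) ^ 2 := by
  set c : ℝ := deriv^[2] ψ 1 with hc_def
  have hc : 0 < c := hpos 1 one_pos
  have hC3 : ContDiffOn ℝ 3 (deriv ψ) (Set.Ioi 0) :=
    hC4.deriv_of_isOpen isOpen_Ioi (by norm_num)
  have hC2 : ContDiffOn ℝ 2 (deriv^[2] ψ) (Set.Ioi 0) :=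
    hC3.deriv_of_isOpen isOpen_Ioi (by norm_num)
  have hC1 : ContDiffOn ℝ 1 (deriv^[3] ψ) (Set.Ioi 0) :=
    hC2.deriv_of_isOpen isOpen_Ioi (by norm_num)
  -- pointwise HasDerivAt facts
  have hdψ : ∀ t : ℝ, 0 < t → HasDerivAt ψ (deriv ψ t) t := by
    intro t ht
    exact (((hC4.differentiableOn (by norm_num)).differentiableAt
      (isOpen_Ioi.mem_nhds ht)).hasDerivAt)
  have hdψ1 : ∀ t : ℝ, 0 < t → HasDerivAt (deriv ψ) (deriv^[2] ψ t) t := by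
    intro t ht
    exact (((hC3.differentiableOn (by norm_num)).differentiableAt
      (isOpen_Ioi.mem_nhds ht)).hasDerivAt)
  have hdψ2 : ∀ t : ℝ, 0 < t → HasDerivAt (deriv^[2] ψ) (deriv^[3] ψ t) t := by
    intro t ht
    exact (((hC2.differentiableOn (by norm_num)).differentiableAt
      (isOpen_Ioi.mem_nhds ht)).hasDerivAt)
  have hdψ3 : ∀ t : ℝ, 0 < t → HasDerivAt (deriv^[3] ψ) (deriv^[4] ψ t) t := by
    intro t ht
    exact (((hC1.differentiableOn (by norm_num)).differentiableAt
      (isOpen_Ioi.mem_nhds ht)).hasDerivAt)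
  -- concavity of the reciprocal of the second derivative
  have hconc : ConcaveOn ℝ (Set.Ioi 0) (fun t => (deriv^[2] ψ t)⁻¹) := by
    apply concaveOn_of_hasDerivWithinAt2_nonpos (convex_Ioi 0)
      (f' := fun t => -(deriv^[3] ψ t) / (deriv^[2] ψ t) ^ 2)
      (f'' := fun t => (2 * (deriv^[3] ψ t) ^ 2 - deriv^[2] ψ t * deriv^[4] ψ t)
        / (deriv^[2] ψ t) ^ 3)
    · exact (hC2.continuousOn).inv₀ (fun t ht => (hpos t ht).ne')
    · rw [interior_Ioi]
      intro x hx
      exact ((hdψ2 x hx).inv (hpos x hx).ne').hasDerivWithinAt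
    · rw [interior_Ioi]
      intro x hx
      have hfx : deriv^[2] ψ x ≠ 0 := (hpos x hx).ne'
      have h1d : HasDerivAt (fun t => -(deriv^[3] ψ t) / (deriv^[2] ψ t) ^ 2)
          ((-(deriv^[4] ψ x) * (deriv^[2] ψ x) ^ 2 -
            (-(deriv^[3] ψ x)) * (2 * deriv^[2] ψ x * deriv^[3] ψ x))
            / ((deriv^[2] ψ x) ^ 2) ^ 2) x := by
        have hnum : HasDerivAt (fun t => -(deriv^[3] ψ t)) (-(deriv^[4] ψ x)) x :=
          (hdψ3 x hx).neg
        have hden : HasDerivAt (fun t => (deriv^[2] ψ t) ^ 2)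
            (2 * deriv^[2] ψ x * deriv^[3] ψ x) x := by
          have := (hdψ2 x hx).fun_pow 2
          simpa [mul_comm, mul_assoc, mul_left_comm] using this
        exact hnum.div hden (pow_ne_zero 2 hfx)
      have heq : (-(deriv^[4] ψ x) * (deriv^[2] ψ x) ^ 2 -
            (-(deriv^[3] ψ x)) * (2 * deriv^[2] ψ x * deriv^[3] ψ x))
            / ((deriv^[2] ψ x) ^ 2) ^ 2
          = (2 * (deriv^[3] ψ x) ^ 2 - deriv^[2] ψ x * deriv^[4] ψ x)
            / (deriv^[2] ψ x) ^ 3 := by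
        rw [div_eq_div_iff (pow_ne_zero 2 (pow_ne_zero 2 hfx)) (pow_ne_zero 3 hfx)]
        ring
      rw [heq] at h1d
      exact h1d.hasDerivWithinAt
    · rw [interior_Ioi]
      intro x hx
      apply div_nonpos_of_nonpos_of_nonneg
      · have := hadm x hx; linarith
      · have hfx := hpos x hx; positivity
  -- key pointwise bounds on the second derivative
  have hmin : ∀ t : ℝ, 0 < t → min t 1 * deriv^[2] ψ t ≤ c := by
    intro t ht
    have h0 := aux_concave_bound _ hconc (fun s hs => by
      simpa using inv_pos.mpr (hpos s hs)) t ht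
    have hft : 0 < deriv^[2] ψ t := hpos t ht
    have e1 : deriv^[2] ψ t * (deriv^[2] ψ t)⁻¹ = 1 := mul_inv_cancel₀ hft.ne'
    have e2 : c * c⁻¹ = 1 := mul_inv_cancel₀ hc.ne'
    nlinarith [mul_pos hft hc, mul_nonneg (mul_nonneg (le_min ht.le zero_le_one)
      hft.le) hc.le]
  have keyA : ∀ t : ℝ, 1 ≤ t → deriv^[2] ψ t ≤ c := by
    intro t ht
    have := hmin t (lt_of_lt_of_le one_pos ht)
    rwa [min_eq_right ht, one_mul] at this
  have keyB : ∀ t : ℝ, 0 < t → t ≤ 1 → t * deriv^[2] ψ t ≤ c := by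
    intro t ht ht1
    have := hmin t ht
    rwa [min_eq_left ht1] at this
  -- Case y ≥ 1
  have caseA : ∀ y : ℝ, 1 ≤ y → ψ y ≤ c * (y - 1) ^ 2 := by
    intro y hy
    have hsub : Set.Ici (1:ℝ) ⊆ Set.Ioi 0 := fun x hx => Set.mem_Ioi.mpr (lt_of_lt_of_le one_pos hx)
    have contψ' : ContinuousOn (deriv ψ) (Set.Ici 1) := hC3.continuousOn.mono hsub
    have mono1 : MonotoneOn (fun t => 2 * c * (t - 1) - deriv ψ t) (Set.Ici 1) := by
      apply monotoneOn_of_deriv_nonneg (convex_Ici 1)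
      · exact ((continuous_const.mul (continuous_id.sub continuous_const)).continuousOn).sub contψ'
      · rw [interior_Ici]
        intro x hx
        have hx0 : (0:ℝ) < x := lt_trans one_pos hx
        have hd : HasDerivAt (fun t => 2 * c * (t - 1) - deriv ψ t)
            (2 * c - deriv^[2] ψ x) x := by
          have h5 : HasDerivAt (fun t : ℝ => 2 * c * (t - 1)) (2 * c) x := by
            simpa using (((hasDerivAt_id x).sub_const 1).const_mul (2 * c))
          exact h5.sub (hdψ1 x hx0)
        exact hd.differentiableAt.differentiableWithinAt
      · rw [interior_Ici]
        intro x hx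
        have hx0 : (0:ℝ) < x := lt_trans one_pos hx
        have hd : HasDerivAt (fun t => 2 * c * (t - 1) - deriv ψ t)
            (2 * c - deriv^[2] ψ x) x := by
          have h5 : HasDerivAt (fun t : ℝ => 2 * c * (t - 1)) (2 * c) x := by
            simpa using (((hasDerivAt_id x).sub_const 1).const_mul (2 * c))
          exact h5.sub (hdψ1 x hx0)
        rw [hd.deriv]
        have := keyA x hx.le
        linarith
    have φ'nonneg : ∀ t : ℝ, 1 ≤ t → 0 ≤ 2 * c * (t - 1) - deriv ψ t := by
      intro t ht
      have := mono1 (self_mem_Ici) ht ht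
      simp only [sub_self, mul_zero, h1', sub_zero] at this
      linarith
    have mono2 : MonotoneOn (fun t => c * (t - 1) ^ 2 - ψ t) (Set.Ici 1) := by
      apply monotoneOn_of_deriv_nonneg (convex_Ici 1)
      · exact ((continuous_const.mul ((continuous_id.sub continuous_const).pow 2)).continuousOn).sub
          (hcont.mono (fun x hx => Set.mem_Ici.mpr (le_trans zero_le_one hx)))
      · rw [interior_Ici]
        intro x hx
        have hx0 : (0:ℝ) < x := lt_trans one_pos hx
        have hd : HasDerivAt (fun t => c * (t - 1) ^ 2 - ψ t)
            (2 * c * (x - 1) - deriv ψ x) x := by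
          have h5 : HasDerivAt (fun t : ℝ => c * (t - 1) ^ 2) (2 * c * (x - 1)) x := by
            have : HasDerivAt (fun y : ℝ => c * (y - 1) ^ 2)
                (c * (((2:ℕ):ℝ) * (x - 1) ^ (2 - 1) * 1)) x :=
              (((hasDerivAt_id x).sub_const 1).fun_pow 2).const_mul c
            convert this using 1
            ring
          exact h5.sub (hdψ x hx0)
        exact hd.differentiableAt.differentiableWithinAt
      · rw [interior_Ici]
        intro x hx
        have hx0 : (0:ℝ) < x := lt_trans one_pos hx
        have hd : HasDerivAt (fun t => c * (t - 1) ^ 2 - ψ t)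
            (2 * c * (x - 1) - deriv ψ x) x := by
          have h5 : HasDerivAt (fun t : ℝ => c * (t - 1) ^ 2) (2 * c * (x - 1)) x := by
            have : HasDerivAt (fun y : ℝ => c * (y - 1) ^ 2)
                (c * (((2:ℕ):ℝ) * (x - 1) ^ (2 - 1) * 1)) x :=
              (((hasDerivAt_id x).sub_const 1).fun_pow 2).const_mul c
            convert this using 1
            ring
          exact h5.sub (hdψ x hx0)
        rw [hd.deriv]
        exact φ'nonneg x hx.le
    have := mono2 self_mem_Ici (Set.mem_Ici.mpr hy) hy
    simp only [sub_self, h1, sub_zero] at this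
    nlinarith
  -- Case 0 < y ≤ 1
  have caseB : ∀ y : ℝ, 0 < y → y ≤ 1 → ψ y ≤ c * (y - 1) ^ 2 := by
    intro y hy hy1
    have hsub : Set.Icc y 1 ⊆ Set.Ioi 0 := fun x hx => lt_of_lt_of_le hy hx.1
    have hlogc : ContinuousOn Real.log (Set.Icc y 1) :=
      Real.continuousOn_log.mono (fun x hx => by
        simp only [Set.mem_compl_iff, Set.mem_singleton_iff]
        exact (lt_of_lt_of_le hy hx.1).ne')
    -- derivative of the comparison function
    have hgd : ∀ x : ℝ, 0 < x → HasDerivAt (fun t => c * (1 - t + t * Real.log t))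
        (c * Real.log x) x := by
      intro x hx0
      have hinner : HasDerivAt (fun t : ℝ => 1 - t + t * Real.log t) (Real.log x) x := by
        have hl : HasDerivAt (fun t : ℝ => t * Real.log t)
            (1 * Real.log x + x * x⁻¹) x :=
          (hasDerivAt_id x).mul (Real.hasDerivAt_log hx0.ne')
        have hlin : HasDerivAt (fun t : ℝ => 1 - t) (-1 : ℝ) x := by
          simpa using (hasDerivAt_id x).const_sub 1
        have : HasDerivAt (fun t : ℝ => 1 - t + t * Real.log t)
            (-1 + (1 * Real.log x + x * x⁻¹)) x := hlin.add hl
        convert this using 1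
        rw [mul_inv_cancel₀ hx0.ne']
        ring
      simpa [mul_comm] using hinner.const_mul c
    have mono1 : MonotoneOn (fun t => c * Real.log t - deriv ψ t) (Set.Icc y 1) := by
      apply monotoneOn_of_deriv_nonneg (convex_Icc y 1)
      · exact ((continuousOn_const.mul hlogc)).sub (hC3.continuousOn.mono hsub)
      · rw [interior_Icc]
        intro x hx
        have hx0 : (0:ℝ) < x := lt_trans hy hx.1
        have hd : HasDerivAt (fun t => c * Real.log t - deriv ψ t)
            (c * x⁻¹ - deriv^[2] ψ x) x :=
          ((Real.hasDerivAt_log hx0.ne').const_mul c).sub (hdψ1 x hx0)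
        exact hd.differentiableAt.differentiableWithinAt
      · rw [interior_Icc]
        intro x hx
        have hx0 : (0:ℝ) < x := lt_trans hy hx.1
        have hd : HasDerivAt (fun t => c * Real.log t - deriv ψ t)
            (c * x⁻¹ - deriv^[2] ψ x) x :=
          ((Real.hasDerivAt_log hx0.ne').const_mul c).sub (hdψ1 x hx0)
        rw [hd.deriv]
        have hkb := keyB x hx0 hx.2.le
        have hfb : deriv^[2] ψ x ≤ c / x := (le_div_iff₀ hx0).mpr (by linarith)
        rw [div_eq_mul_inv] at hfb
        linarith
    have χ'nonpos : ∀ t ∈ Set.Icc y 1, c * Real.log t - deriv ψ t ≤ 0 := by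
      intro t ht
      have := mono1 ht (Set.right_mem_Icc.mpr hy1) ht.2
      simp only [Real.log_one, mul_zero, h1', sub_zero] at this
      linarith
    have anti1 : AntitoneOn (fun t => c * (1 - t + t * Real.log t) - ψ t) (Set.Icc y 1) := by
      apply antitoneOn_of_deriv_nonpos (convex_Icc y 1)
      · apply ContinuousOn.sub _ (hcont.mono (fun x hx => Set.mem_Ici.mpr (le_of_lt (hsub hx))))
        exact continuousOn_const.mul
          ((continuousOn_const.sub continuousOn_id).add (continuousOn_id.mul hlogc))
      · rw [interior_Icc]
        intro x hx
        have hx0 : (0:ℝ) < x := lt_trans hy hx.1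
        exact ((hgd x hx0).sub (hdψ x hx0)).differentiableAt.differentiableWithinAt
      · rw [interior_Icc]
        intro x hx
        have hx0 : (0:ℝ) < x := lt_trans hy hx.1
        have hd : HasDerivAt (fun t => c * (1 - t + t * Real.log t) - ψ t)
            (c * Real.log x - deriv ψ x) x := (hgd x hx0).sub (hdψ x hx0)
        rw [hd.deriv]
        have := χ'nonpos x ⟨hx.1.le, hx.2.le⟩
        linarith
    have hval := anti1 (Set.left_mem_Icc.mpr hy1) (Set.right_mem_Icc.mpr hy1) hy1
    simp only [Real.log_one, mul_zero, add_zero, mul_one, sub_self, h1, sub_zero] at hval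
    -- hval : c * (1 - 1 + 1 * log 1) - ψ 1 ≤ c * (1 - y + y log y) - ψ y
    have hlog : Real.log y ≤ y - 1 := Real.log_le_sub_one_of_pos hy
    have hylog : y * Real.log y ≤ y * (y - 1) :=
      mul_le_mul_of_nonneg_left hlog hy.le
    nlinarith
  -- combine for all y > 0
  have main : ∀ y : ℝ, 0 < y → ψ y ≤ c * (y - 1) ^ 2 := by
    intro y hy
    rcases le_or_gt y 1 with h | h
    · exact caseB y hy h
    · exact caseA y h.le
  -- y = 0 by continuity
  intro y hy
  rcases hy.lt_or_eq with hy0 | hy0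
  · exact main y hy0
  · subst hy0
    have htψ : Tendsto ψ (𝓝[>] (0:ℝ)) (𝓝 (ψ 0)) :=
      ((hcont 0 (Set.self_mem_Ici)).tendsto).mono_left
        (nhdsWithin_mono 0 Set.Ioi_subset_Ici_self)
    have htg : Tendsto (fun y : ℝ => c * (y - 1) ^ 2) (𝓝[>] (0:ℝ))
        (𝓝 (c * ((0:ℝ) - 1) ^ 2)) := by
      apply Tendsto.mono_left _ nhdsWithin_le_nhds
      exact (continuous_const.mul ((continuous_id.sub continuous_const).pow 2)).tendsto 0
    have := le_of_tendsto_of_tendsto htψ htg (by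
      filter_upwards [self_mem_nhdsWithin] with s hs using main s hs)
    simpa using this
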